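/- Let N be a nest, (E_i)_{i∈ℕ} pairwise orthogonal intervals of N, Δ_σ(X) := Σ_{i∈σ} E_i X E_i for σ ⊆ ℕ, and Δ := Δ_ℕ. If P is a primitive ideal of T(N) with ker Δ ⊆ P, then Σ := {σ ⊆ ℕ : ker Δ_σ ⊆ P} is an ultrafilter on ℕ. -/

import Mathlib

noncomputable section

universe u

variable {H : Type u} [NormedAddCommGroup H] [InnerProductSpace ℂ H] [CompleteSpace H]
  [TopologicalSpace.SeparableSpace H]

/-- A nest: a linearly ordered set of orthogonal projections containing `0` and `1`. -/
structure Nest (H : Type u) [NormedAddCommGroup H] [InnerProductSpace ℂ H]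
    [CompleteSpace H] where
  carrier : Set (H →L[ℂ] H)
  isProj : ∀ P ∈ carrier, IsSelfAdjoint P ∧ P * P = P
  zero_mem : (0 : H →L[ℂ] H) ∈ carrier
  one_mem : (1 : H →L[ℂ] H) ∈ carrier
  chain : ∀ P ∈ carrier, ∀ Q ∈ carrier, Q * P = P ∨ P * Q = Q

/-- Order on projections: `P ≤ Q` iff `ran P ⊆ ran Q`. -/
def projLE (P Q : H →L[ℂ] H) : Prop := Q * P = P

/-- Strict order on projections. -/
def projLT (P Q : H →L[ℂ] H) : Prop := projLE P Q ∧ P ≠ Q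

/-- The nest algebra: all bounded operators leaving invariant the range of every
projection in the nest, i.e. `(1 - P) X P = 0` for every `P` in the nest. -/
def nestAlgebra (𝒩 : Nest H) : Subalgebra ℂ (H →L[ℂ] H) where
  carrier := {X | ∀ P ∈ 𝒩.carrier, (1 - P) * X * P = 0}
  mul_mem' := by
    intro X Y hX hY P hP
    have hX' := hX P hP
    have hY' := hY P hP
    have hYP : Y * P = P * (Y * P) := by
      have h : (1 - P) * Y * P + P * Y * P = Y * P := by noncomm_ring
      rw [hY', zero_add] at h
      rw [← mul_assoc]; exact h.symm
    calc (1 - P) * (X * Y) * P = (1 - P) * X * (Y * P) := by noncomm_ring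
      _ = (1 - P) * X * (P * (Y * P)) := by rw [← hYP]
      _ = ((1 - P) * X * P) * (Y * P) := by noncomm_ring
      _ = 0 := by rw [hX', zero_mul]
  one_mem' := by
    intro P hP
    have h := (𝒩.isProj P hP).2
    calc (1 - P) * 1 * P = P - P * P := by noncomm_ring
      _ = 0 := by rw [h, sub_self]
  add_mem' := by
    intro X Y hX hY P hP
    have hX' := hX P hP
    have hY' := hY P hP
    calc (1 - P) * (X + Y) * P = (1 - P) * X * P + (1 - P) * Y * P := by noncomm_ring
      _ = 0 := by rw [hX', hY', add_zero]
  zero_mem' := by intro P hP; simp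
  algebraMap_mem' := by
    intro c P hP
    have h := (𝒩.isProj P hP).2
    have h1 : (1 - P) * 1 * P = 0 := by
      calc (1 - P) * 1 * P = P - P * P := by noncomm_ring
        _ = 0 := by rw [h, sub_self]
    calc (1 - P) * (algebraMap ℂ (H →L[ℂ] H) c) * P
        = (1 - P) * (c • (1 : H →L[ℂ] H)) * P := by rw [Algebra.algebraMap_eq_smul_one]
      _ = c • ((1 - P) * 1 * P) := by rw [mul_smul_comm, smul_mul_assoc]
      _ = 0 := by rw [h1, smul_zero]

/-- A (left) primitive ideal of a unital ring: the kernel of the left regular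
representation on the quotient by a maximal left ideal, i.e. the largest two-sided
ideal `{x | x·R ⊆ L}` contained in a maximal left ideal `L`. -/
def IsLeftPrimitive (R : Type*) [Ring R] (P : Set R) : Prop :=
  ∃ L : Ideal R, L.IsMaximal ∧ P = {x : R | ∀ r : R, x * r ∈ L}

/-- An interval of the nest: a difference `N - M` of nest projections `M ≤ N`. -/
def IsIntervalOf (𝒩 : Nest H) (E : H →L[ℂ] H) : Prop :=
  ∃ M ∈ 𝒩.carrier, ∃ N ∈ 𝒩.carrier, projLE M N ∧ E = N - M

/-- The kernel of the block-diagonal expectation `Δ_σ(X) = Σ_{i ∈ σ} E_i X E_i`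
(for pairwise orthogonal intervals `E_i`, `Δ_σ(X) = 0` iff every block
`E_i X E_i` with `i ∈ σ` vanishes). -/
def kerDelta (𝒩 : Nest H) (E : ℕ → H →L[ℂ] H) (σ : Set ℕ) :
    Set (nestAlgebra 𝒩) :=
  {X | ∀ i ∈ σ, E i * (X : H →L[ℂ] H) * E i = 0}


namespace Statement18Aux

local notation "⟪" x ", " y "⟫" => inner (𝕜 := ℂ) x y

lemma nest_comm (𝒩 : Nest H) {Q R : H →L[ℂ] H} (hQ : Q ∈ 𝒩.carrier)
    (hR : R ∈ 𝒩.carrier) : Q * R = R * Q := by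
  have hsQ := (𝒩.isProj Q hQ).1
  have hsR := (𝒩.isProj R hR).1
  rcases 𝒩.chain Q hQ R hR with h | h
  · have h' : Q * R = Q := by
      have := congrArg star h
      rwa [star_mul, hsQ.star_eq, hsR.star_eq] at this
    rw [h, h']
  · have h' : R * Q = R := by
      have := congrArg star h
      rwa [star_mul, hsQ.star_eq, hsR.star_eq] at this
    rw [h, h']

lemma interval_selfAdjoint {𝒩 : Nest H} {e : H →L[ℂ] H} (he : IsIntervalOf 𝒩 e) :
    IsSelfAdjoint e := by
  obtain ⟨M, hM, N, hN, -, rfl⟩ := he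
  exact ((𝒩.isProj N hN).1).sub ((𝒩.isProj M hM).1)

lemma interval_comm_nest {𝒩 : Nest H} {e Q : H →L[ℂ] H} (he : IsIntervalOf 𝒩 e)
    (hQ : Q ∈ 𝒩.carrier) : Q * e = e * Q := by
  obtain ⟨M, hM, N, hN, -, rfl⟩ := he
  rw [mul_sub, sub_mul, nest_comm 𝒩 hQ hN, nest_comm 𝒩 hQ hM]

/-- inner product moves a self-adjoint operator across. -/
lemma sa_inner {T : H →L[ℂ] H} (hT : IsSelfAdjoint T) (x y : H) :
    ⟪T x, y⟫ = ⟪x, T y⟫ := by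
  rw [ContinuousLinearMap.isSelfAdjoint_iff'] at hT
  conv_lhs => rw [← hT]
  exact ContinuousLinearMap.adjoint_inner_left T y x

variable (E : ℕ → H →L[ℂ] H)

/-- The closed subspace spanned by the ranges of `E i`, `i ∈ σ`. -/
def Ksub (σ : Set ℕ) : Submodule ℂ H :=
  (Submodule.span ℂ (⋃ i ∈ σ, Set.range (E i))).topologicalClosure

lemma isClosed_Ksub (σ : Set ℕ) : IsClosed (Ksub E σ : Set H) :=
  Submodule.isClosed_topologicalClosure _

instance (σ : Set ℕ) : CompleteSpace (Ksub E σ) :=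
  (isClosed_Ksub E σ).completeSpace_coe

/-- The orthogonal projection onto `Ksub E σ`, as an operator on `H`. -/
def Pop (σ : Set ℕ) : H →L[ℂ] H :=
  (Ksub E σ).subtypeL.comp (Submodule.orthogonalProjectionOnto (Ksub E σ))

lemma Pop_apply (σ : Set ℕ) (x : H) :
    Pop E σ x = (Submodule.orthogonalProjectionOnto (Ksub E σ) x : H) := rfl

lemma mem_Ksub {σ : Set ℕ} {i : ℕ} (hi : i ∈ σ) (x : H) : E i x ∈ Ksub E σ :=
  Submodule.le_topologicalClosure _
    (Submodule.subset_span (Set.mem_biUnion hi ⟨x, rfl⟩))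

lemma Pop_fix {σ : Set ℕ} {v : H} (hv : v ∈ Ksub E σ) : Pop E σ v = v := by
  rw [Pop_apply]; exact (Submodule.starProjection_eq_self_iff (K := Ksub E σ)).2 hv

lemma Pop_mem (σ : Set ℕ) (x : H) : Pop E σ x ∈ Ksub E σ := by
  rw [Pop_apply]; exact (Submodule.orthogonalProjectionOnto (Ksub E σ) x).2

lemma Pop_orth {σ : Set ℕ} {v : H} (hv : v ∈ (Ksub E σ)ᗮ) : Pop E σ v = 0 := by
  rw [Pop_apply, Submodule.orthogonalProjectionOnto_apply_of_mem_orthogonal hv,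
    Submodule.coe_zero]

lemma sub_Pop_mem_orth (σ : Set ℕ) (x : H) : x - Pop E σ x ∈ (Ksub E σ)ᗮ := by
  rw [Pop_apply]
  exact Submodule.sub_starProjection_mem_orthogonal (K := Ksub E σ) x

variable {E}

/-- If `j ∉ σ` then `E j` kills `Ksub E σ`. -/
lemma E_zero_on_Ksub (horth : ∀ i j, i ≠ j → E i * E j = 0) {σ : Set ℕ} {j : ℕ}
    (hj : j ∉ σ) {v : H} (hv : v ∈ Ksub E σ) : E j v = 0 := by
  have hle : Ksub E σ ≤ LinearMap.ker (E j : H →ₗ[ℂ] H) := by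
    apply Submodule.topologicalClosure_minimal
    · rw [Submodule.span_le]
      rintro x hx
      simp only [Set.mem_iUnion] at hx
      obtain ⟨i, hi, y, rfl⟩ := hx
      have hij : j ≠ i := fun h => hj (h ▸ hi)
      have : E j (E i y) = (E j * E i) y := rfl
      simp only [SetLike.mem_coe, LinearMap.mem_ker, ContinuousLinearMap.coe_coe, this, horth j i hij,
        ContinuousLinearMap.zero_apply]
    · exact ContinuousLinearMap.isClosed_ker (E j)
  exact hle hv

/-- If `i ∈ σ` then `E i` kills the orthogonal complement of `Ksub E σ`. -/
lemma E_zero_on_orth (hsa : ∀ i, IsSelfAdjoint (E i)) {σ : Set ℕ} {i : ℕ}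
    (hi : i ∈ σ) {v : H} (hv : v ∈ (Ksub E σ)ᗮ) : E i v = 0 := by
  have h : ⟪E i v, E i v⟫ = 0 := by
    rw [sa_inner (hsa i) v (E i v)]
    exact Submodule.inner_left_of_mem_orthogonal (mem_Ksub E hi (E i v)) hv
  exact inner_self_eq_zero.1 h

/-- If `i ∉ σ` then the range of `E i` is orthogonal to `Ksub E σ`. -/
lemma E_mem_orth (hsa : ∀ i, IsSelfAdjoint (E i))
    (horth : ∀ i j, i ≠ j → E i * E j = 0) {σ : Set ℕ} {i : ℕ}
    (hi : i ∉ σ) (x : H) : E i x ∈ (Ksub E σ)ᗮ := by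
  rw [Submodule.mem_orthogonal]
  intro u hu
  rw [← sa_inner (hsa i) u x]
  rw [E_zero_on_Ksub horth hi hu, inner_zero_left]

lemma E_Pop_of_mem (hsa : ∀ i, IsSelfAdjoint (E i)) {σ : Set ℕ} {i : ℕ}
    (hi : i ∈ σ) : E i * Pop E σ = E i := by
  ext x
  have h : E i (x - Pop E σ x) = 0 :=
    E_zero_on_orth hsa hi (sub_Pop_mem_orth E σ x)
  have := congrArg (fun y => E i x - y) h
  simp only [map_sub, sub_zero, sub_sub_cancel] at this
  simpa [ContinuousLinearMap.mul_apply] using this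

lemma E_Pop_of_not (horth : ∀ i j, i ≠ j → E i * E j = 0) {σ : Set ℕ} {i : ℕ}
    (hi : i ∉ σ) : E i * Pop E σ = 0 := by
  ext x
  simpa [ContinuousLinearMap.mul_apply] using
    E_zero_on_Ksub horth hi (Pop_mem E σ x)

lemma Pop_E_of_mem {σ : Set ℕ} {i : ℕ} (hi : i ∈ σ) :
    Pop E σ * E i = E i := by
  ext x
  simpa [ContinuousLinearMap.mul_apply] using Pop_fix E (mem_Ksub E hi x)

lemma Pop_E_of_not (hsa : ∀ i, IsSelfAdjoint (E i))
    (horth : ∀ i j, i ≠ j → E i * E j = 0) {σ : Set ℕ} {i : ℕ}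
    (hi : i ∉ σ) : Pop E σ * E i = 0 := by
  ext x
  simpa [ContinuousLinearMap.mul_apply] using
    Pop_orth E (E_mem_orth hsa horth hi x)

lemma Pop_idem (σ : Set ℕ) : Pop E σ * Pop E σ = Pop E σ := by
  ext x
  simpa [ContinuousLinearMap.mul_apply] using Pop_fix E (Pop_mem E σ x)

/-- `Pop E σ` belongs to the nest algebra. -/
lemma Pop_mem_nestAlgebra (𝒩 : Nest H) (hE : ∀ i, IsIntervalOf 𝒩 (E i))
    (σ : Set ℕ) : Pop E σ ∈ nestAlgebra 𝒩 := by
  intro Q hQ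
  have hQsa := (𝒩.isProj Q hQ).1
  have hQidem := (𝒩.isProj Q hQ).2
  -- Q leaves Ksub invariant
  have hKinv : ∀ v ∈ Ksub E σ, Q v ∈ Ksub E σ := by
    have hle : Ksub E σ ≤ (Ksub E σ).comap (Q : H →ₗ[ℂ] H) := by
      apply Submodule.topologicalClosure_minimal
      · rw [Submodule.span_le]
        rintro x hx
        simp only [Set.mem_iUnion] at hx
        obtain ⟨i, hi, y, rfl⟩ := hx
        have : Q (E i y) = E i (Q y) := by
          have := congrArg (fun T => T y) (interval_comm_nest (hE i) hQ)
          simpa [ContinuousLinearMap.mul_apply] using this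
        simp only [SetLike.mem_coe, Submodule.mem_comap, ContinuousLinearMap.coe_coe,
          this]
        exact mem_Ksub E hi (Q y)
      · exact (isClosed_Ksub E σ).preimage Q.continuous
    exact fun v hv => hle hv
  -- Q leaves the orthogonal complement invariant
  have hKorth : ∀ v ∈ (Ksub E σ)ᗮ, Q v ∈ (Ksub E σ)ᗮ := by
    intro v hv
    rw [Submodule.mem_orthogonal]
    intro u hu
    rw [← sa_inner hQsa u v]
    exact Submodule.inner_right_of_mem_orthogonal (hKinv u hu) hv
  -- Q commutes with Pop
  have hc : Q * Pop E σ = Pop E σ * Q := by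
    ext x
    have hx : Q x = Q (Pop E σ x) + Q (x - Pop E σ x) := by
      rw [← map_add, add_sub_cancel]
    have h1 : Pop E σ (Q (Pop E σ x)) = Q (Pop E σ x) :=
      Pop_fix E (hKinv _ (Pop_mem E σ x))
    have h2 : Pop E σ (Q (x - Pop E σ x)) = 0 :=
      Pop_orth E (hKorth _ (sub_Pop_mem_orth E σ x))
    simp only [ContinuousLinearMap.mul_apply]
    rw [hx, map_add, h1, h2, add_zero]
  have key : Q * (Pop E σ * Q) = Pop E σ * Q := by
    rw [← mul_assoc, hc, mul_assoc, hQidem]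
  calc (1 - Q) * Pop E σ * Q
      = Pop E σ * Q - Q * (Pop E σ * Q) := by noncomm_ring
    _ = 0 := by rw [key, sub_self]

end Statement18Aux

open Statement18Aux

set_option maxHeartbeats 0
set_option synthInstance.maxHeartbeats 2000000

/-- if `(E_i)` are pairwise orthogonal intervals of `𝒩` and `P` is a
primitive ideal of `T(𝒩)` containing `ker Δ` (where `Δ = Δ_ℕ`), then
`Σ = {σ ⊆ ℕ : ker Δ_σ ⊆ P}` is an ultrafilter on `ℕ`. -/
theorem statement18 (𝒩 : Nest H) (E : ℕ → H →L[ℂ] H)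
    (hE : ∀ i, IsIntervalOf 𝒩 (E i)) (horth : ∀ i j, i ≠ j → E i * E j = 0)
    (P : Set (nestAlgebra 𝒩)) (hP : IsLeftPrimitive (nestAlgebra 𝒩) P)
    (hker : kerDelta 𝒩 E Set.univ ⊆ P) :
    ∃ U : Ultrafilter ℕ, ∀ σ : Set ℕ, kerDelta 𝒩 E σ ⊆ P ↔ σ ∈ U := by
  classical
  obtain ⟨L, hLmax, rfl⟩ := hP
  -- basic facts about the intervals
  have hsa : ∀ i, IsSelfAdjoint (E i) := fun i => interval_selfAdjoint (hE i)
  -- the projections, as elements of the nest algebra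
  let p : Set ℕ → nestAlgebra 𝒩 := fun σ => ⟨Pop E σ, Pop_mem_nestAlgebra 𝒩 hE σ⟩
  let P : Set (nestAlgebra 𝒩) :=
    {x : nestAlgebra 𝒩 | ∀ r : nestAlgebra 𝒩, x * r ∈ L}
  -- ideal properties of P
  have hPmem : ∀ x : nestAlgebra 𝒩, x ∈ P ↔ ∀ r : nestAlgebra 𝒩, x * r ∈ L := fun x => Iff.rfl
  have hPsubL : ∀ x ∈ P, x ∈ L := by
    intro x hx
    have := (hPmem x).1 hx 1
    rwa [mul_one] at this
  have hone : (1 : nestAlgebra 𝒩) ∉ P := by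
    intro h
    exact hLmax.ne_top ((Ideal.eq_top_iff_one L).2 (hPsubL 1 h))
  have hPadd : ∀ x ∈ P, ∀ y ∈ P, x + y ∈ P := by
    intro x hx y hy r
    have := L.add_mem ((hPmem x).1 hx r) ((hPmem y).1 hy r)
    rwa [← add_mul] at this
  have hPneg : ∀ x ∈ P, -x ∈ P := by
    intro x hx r
    have := L.neg_mem ((hPmem x).1 hx r)
    convert this using 1; exact neg_mul x r
  have hPsub : ∀ x ∈ P, ∀ y ∈ P, x - y ∈ P := by
    intro x hx y hy
    have := hPadd x hx (-y) (hPneg y hy)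
    rwa [← sub_eq_add_neg] at this
  have hPmulL : ∀ (a : nestAlgebra 𝒩), ∀ x ∈ P, a * x ∈ P := by
    intro a x hx r
    have h1 : x * r ∈ L := (hPmem x).1 hx r
    have := L.smul_mem a h1
    rwa [smul_eq_mul, ← mul_assoc] at this
  have hPmulR : ∀ x ∈ P, ∀ (a : nestAlgebra 𝒩), x * a ∈ P := by
    intro x hx a r
    have := (hPmem x).1 hx (a * r)
    rwa [← mul_assoc] at this
  -- block computations
  have hEp_mem : ∀ (σ : Set ℕ) (i : ℕ), i ∈ σ → E i * ((p σ : nestAlgebra 𝒩) : H →L[ℂ] H) = E i :=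
    fun σ i hi => E_Pop_of_mem hsa hi
  have hEp_not : ∀ (σ : Set ℕ) (i : ℕ), i ∉ σ → E i * ((p σ : nestAlgebra 𝒩) : H →L[ℂ] H) = 0 :=
    fun σ i hi => E_Pop_of_not horth hi
  have hpE_mem : ∀ (σ : Set ℕ) (i : ℕ), i ∈ σ → ((p σ : nestAlgebra 𝒩) : H →L[ℂ] H) * E i = E i :=
    fun σ i hi => Pop_E_of_mem hi
  have hpE_not : ∀ (σ : Set ℕ) (i : ℕ), i ∉ σ → ((p σ : nestAlgebra 𝒩) : H →L[ℂ] H) * E i = 0 :=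
    fun σ i hi => Pop_E_of_not hsa horth hi
  have hkerP : kerDelta 𝒩 E Set.univ ⊆ P := hker
  -- commutators of p σ with everything lie in P
  have hcomm : ∀ (σ : Set ℕ) (X : nestAlgebra 𝒩), p σ * X - X * p σ ∈ P := by
    intro σ X
    apply hkerP
    intro i _
    have hcoe : ((p σ * X - X * p σ : nestAlgebra 𝒩) : H →L[ℂ] H)
        = (p σ : H →L[ℂ] H) * (X : H →L[ℂ] H) - (X : H →L[ℂ] H) * (p σ : H →L[ℂ] H) := rfl
    rw [hcoe]
    have expand : E i * ((p σ : H →L[ℂ] H) * (X : H →L[ℂ] H)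
        - (X : H →L[ℂ] H) * (p σ : H →L[ℂ] H)) * E i
        = (E i * (p σ : H →L[ℂ] H)) * (X : H →L[ℂ] H) * E i
          - E i * (X : H →L[ℂ] H) * ((p σ : H →L[ℂ] H) * E i) := by noncomm_ring
    rw [expand]
    by_cases hi : i ∈ σ
    · rw [hEp_mem σ i hi, hpE_mem σ i hi, sub_self]
    · rw [hEp_not σ i hi, hpE_not σ i hi, zero_mul, zero_mul, mul_zero, sub_self]
  -- idempotence
  have hidem : ∀ σ : Set ℕ, p σ * p σ = p σ := by
    intro σ
    exact Subtype.ext (Pop_idem σ)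
  -- the decomposition lemma
  have hdecomp : ∀ (q : nestAlgebra 𝒩) (ρ : Set ℕ),
      (∀ i ∈ ρ, E i * (q : H →L[ℂ] H) = E i) →
      (∀ i ∈ ρ, (q : H →L[ℂ] H) * E i = E i) →
      (∀ i, i ∉ ρ → E i * (q : H →L[ℂ] H) = 0) →
      (∀ i, i ∉ ρ → (q : H →L[ℂ] H) * E i = 0) →
      (1 - q) ∈ P → kerDelta 𝒩 E ρ ⊆ P := by
    intro q ρ hin hin' hout hout' hq X hX
    have hsplit : X = X * (1 - q) + (1 - q) * X * q + q * X * q := by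
      simp only [mul_sub, sub_mul, mul_add, add_mul, one_mul, mul_one, neg_sub, mul_assoc]; abel
    rw [hsplit]
    apply hPadd _ (hPadd _ (hPmulL X _ hq) _ (hPmulR _ (hPmulR _ hq X) q))
    apply hkerP
    intro i _
    have hcoe : ((q * X * q : nestAlgebra 𝒩) : H →L[ℂ] H)
        = (q : H →L[ℂ] H) * (X : H →L[ℂ] H) * (q : H →L[ℂ] H) := rfl
    have expand : E i * ((q : H →L[ℂ] H) * (X : H →L[ℂ] H) * (q : H →L[ℂ] H)) * E i
        = (E i * (q : H →L[ℂ] H)) * (X : H →L[ℂ] H) * ((q : H →L[ℂ] H) * E i) := by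
      noncomm_ring
    rw [hcoe, expand]
    by_cases hi : i ∈ ρ
    · rw [hin i hi, hin' i hi]
      exact hX i hi
    · rw [hout i hi, zero_mul, zero_mul]
  -- characterization : ker Δ_σ ⊆ P ↔ 1 - p σ ∈ P
  have hchar : ∀ σ : Set ℕ, kerDelta 𝒩 E σ ⊆ P ↔ (1 - p σ) ∈ P := by
    intro σ
    constructor
    · intro h
      apply h
      intro i hi
      have hcoe : ((1 - p σ : nestAlgebra 𝒩) : H →L[ℂ] H) = 1 - (p σ : H →L[ℂ] H) := rfl
      rw [hcoe]
      have expand : E i * (1 - (p σ : H →L[ℂ] H)) * E i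
          = E i * E i - (E i * (p σ : H →L[ℂ] H)) * E i := by noncomm_ring
      rw [expand, hEp_mem σ i hi, sub_self]
    · intro h
      exact hdecomp (p σ) σ (fun i hi => hEp_mem σ i hi) (fun i hi => hpE_mem σ i hi)
        (fun i hi => hEp_not σ i hi) (fun i hi => hpE_not σ i hi) h
  -- dichotomy : p σ ∈ P or 1 - p σ ∈ P
  have hdich : ∀ σ : Set ℕ, p σ ∈ P ∨ (1 - p σ) ∈ P := by
    intro σ
    by_cases htop : (L ⊔ Ideal.span {p σ} : Ideal (nestAlgebra 𝒩)) = ⊤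
    · right
      have h1 : (1 : nestAlgebra 𝒩) ∈ L ⊔ Ideal.span {p σ} := htop ▸ Submodule.mem_top
      obtain ⟨l, hl, m, hm, hlm⟩ := Submodule.mem_sup.1 h1
      obtain ⟨c, hc⟩ := Submodule.mem_span_singleton.1 hm
      rw [smul_eq_mul] at hc
      intro r
      show (1 - p σ) * r ∈ L
      -- first: (1-p)*r - r*(1-p) ∈ P
      have hd : (1 - p σ) * r - r * (1 - p σ) ∈ P := by
        have := hPneg _ (hcomm σ r)
        have heq : -(p σ * r - r * p σ) = (1 - p σ) * r - r * (1 - p σ) := by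
          simp only [mul_sub, sub_mul, mul_add, add_mul, one_mul, mul_one, neg_sub, mul_assoc]; abel
        rwa [heq] at this
      -- e := (1-p)*c - c*(1-p) ∈ P
      have he : (1 - p σ) * c - c * (1 - p σ) ∈ P := by
        have := hPneg _ (hcomm σ c)
        have heq : -(p σ * c - c * p σ) = (1 - p σ) * c - c * (1 - p σ) := by
          simp only [mul_sub, sub_mul, mul_add, add_mul, one_mul, mul_one, neg_sub, mul_assoc]; abel
        rwa [heq] at this
      -- (1-p)*(c*p) = e*p  since (1-p)*p = 0
      have hzero : (1 - p σ) * p σ = 0 := by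
        rw [sub_mul, one_mul, hidem σ, sub_self]
      have hkey : (1 - p σ) * (c * p σ)
          = ((1 - p σ) * c - c * (1 - p σ)) * p σ := by
        have : (1 - p σ) * (c * p σ)
            = ((1 - p σ) * c - c * (1 - p σ)) * p σ + c * ((1 - p σ) * p σ) := by
          simp only [mul_sub, sub_mul, mul_add, add_mul, one_mul, mul_one, neg_sub, mul_assoc]; abel
        rw [this, hzero, mul_zero, add_zero]
      -- r*(1-p) = r*(1-p)*l + r*(1-p)*(c*p)
      have hone' : (1 : nestAlgebra 𝒩) = l + c * p σ := by rw [← hc] at hlm; exact hlm.symm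
      have hsplit : r * (1 - p σ)
          = r * (1 - p σ) * l + r * ((1 - p σ) * (c * p σ)) := by
        calc r * (1 - p σ) = r * (1 - p σ) * 1 := by rw [mul_one]
          _ = r * (1 - p σ) * (l + c * p σ) := by rw [← hone']
          _ = r * (1 - p σ) * l + r * ((1 - p σ) * (c * p σ)) := by
              rw [mul_add, mul_assoc r (1 - p σ) (c * p σ)]
      have hterm1 : r * (1 - p σ) * l ∈ L := by
        have := L.smul_mem (r * (1 - p σ)) hl
        rwa [smul_eq_mul] at this
      have hterm2 : r * ((1 - p σ) * (c * p σ)) ∈ L := by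
        rw [hkey]
        exact hPsubL _ (hPmulL r _ (hPmulR _ he (p σ)))
      have hrp : r * (1 - p σ) ∈ L := by
        rw [hsplit]; exact L.add_mem hterm1 hterm2
      have : (1 - p σ) * r = ((1 - p σ) * r - r * (1 - p σ)) + r * (1 - p σ) := (sub_add_cancel _ _).symm
      rw [this]
      exact L.add_mem (hPsubL _ hd) hrp
    · left
      -- the sup equals L, so p σ ∈ L
      have hKL : (L ⊔ Ideal.span {p σ} : Ideal (nestAlgebra 𝒩)) = L := by
        by_contra hne
        have hlt : L < L ⊔ Ideal.span {p σ} :=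
          lt_of_le_of_ne le_sup_left (fun h => hne h.symm)
        exact htop (hLmax.1.2 _ hlt)
      have hpL : p σ ∈ L := by
        have : p σ ∈ (L ⊔ Ideal.span {p σ} : Ideal (nestAlgebra 𝒩)) :=
          Submodule.mem_sup_right (Submodule.mem_span_singleton_self (p σ))
        rwa [hKL] at this
      intro r
      show p σ * r ∈ L
      have h1 : p σ * r - r * p σ ∈ P := hcomm σ r
      have h2 : r * p σ ∈ L := by
        have := L.smul_mem r hpL
        rwa [smul_eq_mul] at this
      have : p σ * r = (p σ * r - r * p σ) + r * p σ := (sub_add_cancel _ _).symm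
      rw [this]
      exact L.add_mem (hPsubL _ h1) h2
  -- z σ := 1 - p σ - p σᶜ ∈ P
  have hz : ∀ σ : Set ℕ, (1 - p σ - p σᶜ) ∈ P := by
    intro σ
    apply hkerP
    intro i _
    have hcoe : ((1 - p σ - p σᶜ : nestAlgebra 𝒩) : H →L[ℂ] H)
        = 1 - (p σ : H →L[ℂ] H) - (p σᶜ : H →L[ℂ] H) := rfl
    rw [hcoe]
    have expand : E i * (1 - (p σ : H →L[ℂ] H) - (p σᶜ : H →L[ℂ] H)) * E i
        = E i * E i - (E i * (p σ : H →L[ℂ] H)) * E i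
          - (E i * (p σᶜ : H →L[ℂ] H)) * E i := by noncomm_ring
    rw [expand]
    by_cases hi : i ∈ σ
    · have hi' : i ∉ σᶜ := fun h => h hi
      rw [hEp_mem σ i hi, hEp_not σᶜ i hi', zero_mul, sub_zero, sub_self]
    · have hi' : i ∈ σᶜ := hi
      rw [hEp_not σ i hi, hEp_mem σᶜ i hi', zero_mul, sub_zero, sub_self]
  -- not both σ and σᶜ
  have hnotboth : ∀ σ : Set ℕ, (1 - p σ) ∈ P → (1 - p σᶜ) ∈ P → False := by
    intro σ h1 h2
    have : (1 : nestAlgebra 𝒩) ∈ P := by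
      have h3 := hPsub _ (hPadd _ h1 _ h2) _ (hz σ)
      have heq : (1 - p σ) + (1 - p σᶜ) - (1 - p σ - p σᶜ) = (1 : nestAlgebra 𝒩) := by abel
      rwa [heq] at h3
    exact hone this
  -- if p σ ∈ P then 1 - p σᶜ ∈ P
  have hflip : ∀ σ : Set ℕ, p σ ∈ P → (1 - p σᶜ) ∈ P := by
    intro σ h
    have h3 := hPadd _ (hz σ) _ h
    have heq : (1 - p σ - p σᶜ) + p σ = 1 - p σᶜ := by abel
    rwa [heq] at h3
  -- build the filter
  let F : Filter ℕ :=
    { sets := {σ | kerDelta 𝒩 E σ ⊆ P}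
      univ_sets := hkerP
      sets_of_superset := by
        intro s t hs hst
        exact fun X hX => hs (fun i hi => hX i (hst hi))
      inter_sets := by
        intro s t hs ht
        have h1 : (1 - p s) ∈ P := (hchar s).1 hs
        have h2 : (1 - p t) ∈ P := (hchar t).1 ht
        have hq : (1 - p s * p t) ∈ P := by
          have h3 := hPadd _ h1 _ (hPmulL (p s) _ h2)
          have heq : (1 - p s) + p s * (1 - p t) = 1 - p s * p t := by
            simp only [mul_sub, sub_mul, mul_add, add_mul, one_mul, mul_one, neg_sub, mul_assoc]; abel
          rwa [heq] at h3
        have hqcoe : ((p s * p t : nestAlgebra 𝒩) : H →L[ℂ] H)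
            = (p s : H →L[ℂ] H) * (p t : H →L[ℂ] H) := rfl
        apply hdecomp (p s * p t) (s ∩ t)
        · intro i hi
          rw [hqcoe, ← mul_assoc, hEp_mem s i hi.1, hEp_mem t i hi.2]
        · intro i hi
          rw [hqcoe, mul_assoc, hpE_mem t i hi.2, hpE_mem s i hi.1]
        · intro i hi
          rcases Classical.em (i ∈ s) with his | his
          · have hit : i ∉ t := fun h => hi ⟨his, h⟩
            rw [hqcoe, ← mul_assoc, hEp_mem s i his, hEp_not t i hit]
          · rw [hqcoe, ← mul_assoc, hEp_not s i his, zero_mul]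
        · intro i hi
          rcases Classical.em (i ∈ t) with hit | hit
          · have his : i ∉ s := fun h => hi ⟨h, hit⟩
            rw [hqcoe, mul_assoc, hpE_mem t i hit, hpE_not s i his]
          · rw [hqcoe, mul_assoc, hpE_not t i hit, mul_zero]
        · exact hq }
  have hmemF : ∀ σ : Set ℕ, σ ∈ F ↔ kerDelta 𝒩 E σ ⊆ P := fun σ => Iff.rfl
  have hcompl : ∀ s : Set ℕ, sᶜ ∉ F → s ∈ F := by
    intro s hsc
    rcases hdich s with h | h
    · exact absurd ((hchar sᶜ).2 (hflip s h)) hsc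
    · exact (hchar s).2 h
  have hcompl' : ∀ s : Set ℕ, sᶜ ∉ F ↔ s ∈ F := by
    intro s
    constructor
    · exact hcompl s
    · intro hs hsc
      exact hnotboth s ((hchar s).1 hs) ((hchar sᶜ).1 hsc)
  refine ⟨Ultrafilter.ofComplNotMemIff F hcompl', fun σ => ?_⟩
  exact ((hmemF σ).symm.trans (Iff.rfl))
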